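/- Let V be a finite-dimensional complex vector space, P ∈ End(V⊗V) the flip u⊗v ↦ v⊗u, and a₁, ..., a_n ∈ End(V) with ρ(a) = a⊗1 + 1⊗a. Then tr_{V⊗V}(ρ(a₁)⋯ρ(a_n)·P) = Σ_{I ⊆ {1,...,n}} tr_V(a_I · a_{I^c}), where a_I is the ordered product over I. Consequently, the trace in the exterior square satisfies tr_{Λ²V}(ρ(a₁)⋯ρ(a_n)) = (1/2) Σ_{I ⊆ {1,...,n}} ( tr_V(a_I) tr_V(a_{I^c}) - tr_V(a_I a_{I^c}) ). -/

import Mathlib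

open scoped TensorProduct BigOperators

section Aux

variable {R : Type*} [Semiring R]

/-- Expansion of a product of sums over a nodup list, with cross-commuting terms. -/
lemma expand_prod_add_list {ι : Type*} [DecidableEq ι] (x y : ι → R)
    (h : ∀ i j, Commute (x i) (y j)) :
    ∀ (l : List ι), l.Nodup →
      (l.map fun i => x i + y i).prod
        = ∑ I ∈ l.toFinset.powerset,
            ((l.filter (· ∈ I)).map x).prod * ((l.filter (· ∉ I)).map y).prod := by
  intro l
  induction l with
  | nil => intro _; simp
  | cons i t ih =>
    intro hnd
    have hit : i ∉ t := (List.nodup_cons.mp hnd).1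
    have htnd : t.Nodup := (List.nodup_cons.mp hnd).2
    have hit' : i ∉ t.toFinset := by simpa using hit
    rw [List.map_cons, List.prod_cons, ih htnd, List.toFinset_cons,
      Finset.sum_powerset_insert hit', Finset.mul_sum]
    simp_rw [add_mul]
    rw [Finset.sum_add_distrib, add_comm]
    congr 1
    · -- terms from subsets J not containing i : pick `y i` at position i
      apply Finset.sum_congr rfl
      intro J hJ
      have hiJ : i ∉ J := fun hc => hit' (Finset.mem_powerset.mp hJ hc)
      have h1 : (i :: t).filter (· ∈ J) = t.filter (· ∈ J) := by
        simp [List.filter_cons, hiJ]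
      have h2 : (i :: t).filter (· ∉ J) = i :: t.filter (· ∉ J) := by
        simp [List.filter_cons, hiJ]
      rw [h1, h2, List.map_cons, List.prod_cons]
      have hc : Commute (y i) (((t.filter (· ∈ J)).map x).prod) := by
        apply Commute.list_prod_right
        intro z hz
        obtain ⟨j, _, rfl⟩ := List.mem_map.mp hz
        exact (h j i).symm
      rw [← mul_assoc, hc.eq, mul_assoc]
    · -- terms from subsets (insert i J) : pick `x i` at position i
      apply Finset.sum_congr rfl
      intro J hJ
      have hiJ : i ∉ J := fun hc => hit' (Finset.mem_powerset.mp hJ hc)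
      have h1 : (i :: t).filter (· ∈ insert i J) = i :: t.filter (· ∈ J) := by
        rw [List.filter_cons, if_pos (by simp)]
        congr 1
        refine List.filter_congr ?_
        intro j hj
        have hji : j ≠ i := fun hc => hit (hc ▸ hj)
        simp [Finset.mem_insert, hji]
      have h2 : (i :: t).filter (· ∉ insert i J) = t.filter (· ∉ J) := by
        rw [List.filter_cons, if_neg (by simp)]
        refine List.filter_congr ?_
        intro j hj
        have hji : j ≠ i := fun hc => hit (hc ▸ hj)
        simp [Finset.mem_insert, hji]
      rw [h1, h2, List.map_cons, List.prod_cons, mul_assoc]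

end Aux

/-- The sorted list of a finset of `Fin n` is the filtered `finRange`. -/
lemma sort_eq_filter_finRange {n : ℕ} (I : Finset (Fin n)) :
    I.sort (· ≤ ·) = (List.finRange n).filter (· ∈ I) := by
  have hperm : List.Perm (I.sort (· ≤ ·)) ((List.finRange n).filter (· ∈ I)) := by
    apply List.perm_of_nodup_nodup_toFinset_eq (Finset.sort_nodup _ _)
      ((List.nodup_finRange n).filter _)
    rw [Finset.sort_toFinset, List.toFinset_filter]
    ext j
    simp
  exact List.Perm.eq_of_pairwise' (Finset.pairwise_sort _ _)
    ((List.pairwise_le_finRange n).filter _) hperm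

section TensorAux

variable {V : Type*} [AddCommGroup V] [Module ℂ V] [FiniteDimensional ℂ V]

lemma map_list_prod_left (l : List (Module.End ℂ V)) :
    (l.map fun f => TensorProduct.map f (LinearMap.id : V →ₗ[ℂ] V)).prod
      = TensorProduct.map l.prod LinearMap.id := by
  induction l with
  | nil =>
    simp only [List.map_nil, List.prod_nil, ← Module.End.one_eq_id, TensorProduct.map_one]
  | cons f t ih =>
    rw [List.map_cons, List.prod_cons, List.prod_cons, ih]
    exact (TensorProduct.map_mul f t.prod LinearMap.id LinearMap.id).symm

lemma map_list_prod_right (l : List (Module.End ℂ V)) :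
    (l.map fun f => TensorProduct.map (LinearMap.id : V →ₗ[ℂ] V) f).prod
      = TensorProduct.map LinearMap.id l.prod := by
  induction l with
  | nil =>
    simp only [List.map_nil, List.prod_nil, ← Module.End.one_eq_id, TensorProduct.map_one]
  | cons f t ih =>
    rw [List.map_cons, List.prod_cons, List.prod_cons, ih]
    exact (TensorProduct.map_mul LinearMap.id LinearMap.id f t.prod).symm

/-- Trace of `(f ⊗ g) ∘ P` where `P` is the flip. -/
lemma trace_map_comm_flip (f g : Module.End ℂ V) :
    LinearMap.trace ℂ (V ⊗[ℂ] V)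
      (TensorProduct.map f g ∘ₗ (TensorProduct.comm ℂ V V).toLinearMap)
      = LinearMap.trace ℂ V (f * g) := by
  classical
  let b := Module.finBasis ℂ V
  rw [LinearMap.trace_eq_matrix_trace ℂ (b.tensorProduct b),
    LinearMap.trace_eq_matrix_trace ℂ b, LinearMap.toMatrix_mul]
  rw [Matrix.trace, Matrix.trace]
  simp only [Matrix.diag, Matrix.mul_apply]
  rw [Fintype.sum_prod_type]
  apply Finset.sum_congr rfl
  intro i _
  apply Finset.sum_congr rfl
  intro j _
  rw [LinearMap.toMatrix_apply, Module.Basis.tensorProduct_apply, LinearMap.comp_apply]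
  have : (TensorProduct.comm ℂ V V).toLinearMap (b i ⊗ₜ[ℂ] b j) = b j ⊗ₜ[ℂ] b i := rfl
  rw [this, TensorProduct.map_tmul, Module.Basis.tensorProduct_repr_tmul_apply,
    LinearMap.toMatrix_apply, LinearMap.toMatrix_apply, smul_eq_mul, mul_comm]

end TensorAux

/-- For endomorphisms `a₁, ..., a_n` of a finite-dimensional complex vector space `V`,
with `ρ(a) = a⊗1 + 1⊗a` and `P` the flip of `V ⊗ V`, one has
`tr_{V⊗V}(ρ(a₁)⋯ρ(a_n)·P) = Σ_{I} tr_V(a_I · a_{I^c})`, and consequently the trace in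
the exterior square (image of the projector `(1-P)/2`) satisfies
`tr_{Λ²V}(ρ(a₁)⋯ρ(a_n)) = (1/2) Σ_I (tr_V(a_I)tr_V(a_{I^c}) - tr_V(a_I a_{I^c}))`. -/
theorem trace_tensor_square_flip_expansion (V : Type*) [AddCommGroup V] [Module ℂ V]
    [FiniteDimensional ℂ V] (n : ℕ) (a : Fin n → Module.End ℂ V) :
    (LinearMap.trace ℂ (V ⊗[ℂ] V)
        (((List.ofFn fun i =>
            (TensorProduct.map (a i) LinearMap.id + TensorProduct.map LinearMap.id (a i) :
              Module.End ℂ (V ⊗[ℂ] V))).prod)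
          * (TensorProduct.comm ℂ V V).toLinearMap)
      = ∑ I : Finset (Fin n),
          LinearMap.trace ℂ V ((((I.sort (· ≤ ·)).map a).prod) * (((Iᶜ.sort (· ≤ ·)).map a).prod)))
    ∧ (LinearMap.trace ℂ (V ⊗[ℂ] V)
        (((List.ofFn fun i =>
            (TensorProduct.map (a i) LinearMap.id + TensorProduct.map LinearMap.id (a i) :
              Module.End ℂ (V ⊗[ℂ] V))).prod)
          * ((2 : ℂ)⁻¹ • (1 - (TensorProduct.comm ℂ V V).toLinearMap)))
      = (1 / 2) * ∑ I : Finset (Fin n),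
          (LinearMap.trace ℂ V (((I.sort (· ≤ ·)).map a).prod)
              * LinearMap.trace ℂ V (((Iᶜ.sort (· ≤ ·)).map a).prod)
            - LinearMap.trace ℂ V
                ((((I.sort (· ≤ ·)).map a).prod) * (((Iᶜ.sort (· ≤ ·)).map a).prod)))) := by
  classical
  set x : Fin n → Module.End ℂ (V ⊗[ℂ] V) := fun i => TensorProduct.map (a i) LinearMap.id
  set y : Fin n → Module.End ℂ (V ⊗[ℂ] V) := fun i => TensorProduct.map LinearMap.id (a i)
  have hcomm : ∀ i j, Commute (x i) (y j) := by
    intro i j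
    show _ = _
    have h1 : x i * y j = TensorProduct.map (a i) (a j) := by
      simpa [Module.End.mul_eq_comp] using (TensorProduct.map_mul (a i) LinearMap.id LinearMap.id (a j)).symm
    have h2 : y j * x i = TensorProduct.map (a i) (a j) := by
      simpa [Module.End.mul_eq_comp] using (TensorProduct.map_mul LinearMap.id (a i) (a j) LinearMap.id).symm
    rw [h1, h2]
  -- Expand the product
  have hexp : (List.ofFn fun i => x i + y i).prod
      = ∑ I : Finset (Fin n),
          TensorProduct.map (((I.sort (· ≤ ·)).map a).prod) (((Iᶜ.sort (· ≤ ·)).map a).prod) := by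
    rw [List.ofFn_eq_map, expand_prod_add_list x y hcomm _ (List.nodup_finRange n)]
    rw [List.toFinset_finRange, Finset.powerset_univ]
    apply Finset.sum_congr rfl
    intro I _
    have h1 : (List.finRange n).filter (· ∈ I) = I.sort (· ≤ ·) :=
      (sort_eq_filter_finRange I).symm
    have h2 : (List.finRange n).filter (· ∉ I) = Iᶜ.sort (· ≤ ·) := by
      rw [sort_eq_filter_finRange]
      apply List.filter_congr
      intro j _
      simp
    rw [h1, h2]
    have hx : ((I.sort (· ≤ ·)).map x).prod
        = TensorProduct.map (((I.sort (· ≤ ·)).map a).prod) LinearMap.id := by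
      rw [show (I.sort (· ≤ ·)).map x = ((I.sort (· ≤ ·)).map a).map
        (fun f => TensorProduct.map f LinearMap.id) by rw [List.map_map]; rfl]
      exact map_list_prod_left _
    have hy : ((Iᶜ.sort (· ≤ ·)).map y).prod
        = TensorProduct.map LinearMap.id (((Iᶜ.sort (· ≤ ·)).map a).prod) := by
      rw [show (Iᶜ.sort (· ≤ ·)).map y = ((Iᶜ.sort (· ≤ ·)).map a).map
        (fun f => TensorProduct.map (LinearMap.id (R := ℂ) (M := V)) f) by
          rw [List.map_map]; rfl]
      exact map_list_prod_right _
    rw [hx, hy]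
    simpa [Module.End.mul_eq_comp] using (TensorProduct.map_mul (((I.sort (· ≤ ·)).map a).prod) LinearMap.id
      LinearMap.id (((Iᶜ.sort (· ≤ ·)).map a).prod)).symm
  have part1 : LinearMap.trace ℂ (V ⊗[ℂ] V)
      (((List.ofFn fun i => x i + y i).prod) * (TensorProduct.comm ℂ V V).toLinearMap)
      = ∑ I : Finset (Fin n),
          LinearMap.trace ℂ V
            ((((I.sort (· ≤ ·)).map a).prod) * (((Iᶜ.sort (· ≤ ·)).map a).prod)) := by
    rw [hexp, Finset.sum_mul, map_sum]
    apply Finset.sum_congr rfl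
    intro I _
    exact trace_map_comm_flip _ _
  refine ⟨part1, ?_⟩
  have htr : LinearMap.trace ℂ (V ⊗[ℂ] V) ((List.ofFn fun i => x i + y i).prod)
      = ∑ I : Finset (Fin n),
          LinearMap.trace ℂ V (((I.sort (· ≤ ·)).map a).prod)
            * LinearMap.trace ℂ V (((Iᶜ.sort (· ≤ ·)).map a).prod) := by
    rw [hexp, map_sum]
    apply Finset.sum_congr rfl
    intro I _
    exact LinearMap.trace_tensorProduct' _ _
  rw [mul_smul_comm, map_smul, mul_sub, mul_one, map_sub, htr, part1, smul_eq_mul]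
  rw [Finset.sum_sub_distrib]
  ring
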